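/- arXiv:2501.10591 — 3 statements merged into one kernel-verified Lean document; each statement's English description precedes it below -/
import Mathlib

section
/- Let V be a 2-dimensional real inner product space and 𝔸 : V → V a self-adjoint endomorphism with trace zero. Define the symmetric bilinear form h on V by h(v, w) := 2⟨𝔸v, w⟩ + (1 − det 𝔸)⟨v, w⟩. Then for all v, w ∈ V, ⟨(id + 𝔸)v, (id + 𝔸)w⟩ = h(v, w); in particular, id + 𝔸 maps h-unit vectors to ⟨·,·⟩-unit vectors. -/
open scoped RealInnerProductSpace

lemma matrix_sq_of_trace_zero (M : Matrix (Fin 2) (Fin 2) ℝ) (h : Matrix.trace M = 0) :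
    M * M = (-(Matrix.det M)) • 1 := by
  rw [Matrix.trace_fin_two] at h
  have h11 : M 1 1 = -M 0 0 := by linarith
  ext i j
  fin_cases i <;> fin_cases j <;>
    simp [Matrix.mul_apply, Matrix.det_fin_two, Fin.sum_univ_two, Matrix.one_apply, h11] <;>
    ring

lemma lin_sq_of_trace_zero (V : Type*) [AddCommGroup V] [Module ℝ V] [FiniteDimensional ℝ V]
    (hdim : Module.finrank ℝ V = 2) (A : V →ₗ[ℝ] V) (htr : LinearMap.trace ℝ V A = 0) :
    A ∘ₗ A = (-(LinearMap.det A)) • LinearMap.id := by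
  let b := Module.finBasisOfFinrankEq ℝ V hdim
  let M := LinearMap.toMatrix b b A
  have hM : Matrix.trace M = 0 := by
    rw [LinearMap.trace_eq_matrix_trace ℝ b A] at htr; exact htr
  have hdet : Matrix.det M = LinearMap.det A := LinearMap.det_toMatrix b A
  have h2 : M * M = (-(LinearMap.det A)) • 1 := by
    rw [matrix_sq_of_trace_zero M hM, hdet]
  have h3 : A ∘ₗ A = Matrix.toLin b b (M * M) := by
    rw [Matrix.toLin_mul b b b, Matrix.toLin_toMatrix]
  rw [h3, h2, map_smul, Matrix.toLin_one]

/-- If `V` is a 2-dimensional real inner product space and `𝔸 : V → V` is a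
self-adjoint endomorphism with trace zero, and `h(v, w) := 2⟨𝔸v, w⟩ + (1 − det 𝔸)⟨v, w⟩`, then
`⟨(id + 𝔸)v, (id + 𝔸)w⟩ = h(v, w)` for all `v, w`; in particular `id + 𝔸` maps `h`-unit
vectors to `⟨·,·⟩`-unit vectors. -/
theorem id_add_traceless_selfAdjoint_isometry
    (V : Type*) [NormedAddCommGroup V] [InnerProductSpace ℝ V] [FiniteDimensional ℝ V]
    (hdim : Module.finrank ℝ V = 2)
    (A : V →ₗ[ℝ] V)
    (hsa : ∀ v w : V, ⟪A v, w⟫ = ⟪v, A w⟫)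
    (htr : LinearMap.trace ℝ V A = 0)
    (h : V → V → ℝ)
    (hdef : ∀ v w : V, h v w = 2 * ⟪A v, w⟫ + (1 - LinearMap.det A) * ⟪v, w⟫) :
    (∀ v w : V, ⟪((LinearMap.id : V →ₗ[ℝ] V) + A) v, ((LinearMap.id : V →ₗ[ℝ] V) + A) w⟫ = h v w) ∧
      (∀ v : V, h v v = 1 → ‖((LinearMap.id : V →ₗ[ℝ] V) + A) v‖ = 1) := by
  have hsq := lin_sq_of_trace_zero V hdim A htr
  have key : ∀ v w : V,
      ⟪((LinearMap.id : V →ₗ[ℝ] V) + A) v, ((LinearMap.id : V →ₗ[ℝ] V) + A) w⟫ = h v w := by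
    intro v w
    have hAA : A (A w) = (-(LinearMap.det A)) • w := by
      have := congrFun (congrArg DFunLike.coe hsq) w
      simpa using this
    have : ⟪A v, A w⟫ = -(LinearMap.det A) * ⟪v, w⟫ := by
      rw [hsa v (A w), hAA, real_inner_smul_right]
    simp only [LinearMap.add_apply, LinearMap.id_apply, inner_add_add_self, hdef,
      inner_add_left, inner_add_right]
    rw [this, hsa v w]
    ring
  refine ⟨key, fun v hv => ?_⟩
  have h1 : ⟪((LinearMap.id : V →ₗ[ℝ] V) + A) v, ((LinearMap.id : V →ₗ[ℝ] V) + A) v⟫ = 1 := by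
    rw [key v v, hv]
  have := real_inner_self_eq_norm_sq (((LinearMap.id : V →ₗ[ℝ] V) + A) v)
  nlinarith [norm_nonneg (((LinearMap.id : V →ₗ[ℝ] V) + A) v)]
end

section
/- Let V be a 2-dimensional real inner product space and 𝔸 : V → V a self-adjoint endomorphism with trace zero satisfying det 𝔸 > −1. Then the symmetric bilinear form h on V defined by h(v, w) := 2⟨𝔸v, w⟩ + (1 − det 𝔸)⟨v, w⟩ is positive definite, i.e. h is an inner product on V. -/
open scoped RealInnerProductSpace

set_option maxHeartbeats 1000000

/-- If `V` is a 2-dimensional real inner product space and `𝔸 : V → V` is a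
self-adjoint traceless endomorphism with `det 𝔸 > −1`, then the symmetric bilinear form
`h(v, w) := 2⟨𝔸v, w⟩ + (1 − det 𝔸)⟨v, w⟩` is positive definite. -/
theorem h_form_posDef
    (V : Type*) [NormedAddCommGroup V] [InnerProductSpace ℝ V] [FiniteDimensional ℝ V]
    (hdim : Module.finrank ℝ V = 2)
    (A : V →ₗ[ℝ] V)
    (hsa : ∀ v w : V, ⟪A v, w⟫ = ⟪v, A w⟫)
    (htr : LinearMap.trace ℝ V A = 0)
    (hdet : LinearMap.det A > -1)
    (h : V → V → ℝ)
    (hdef : ∀ v w : V, h v w = 2 * ⟪A v, w⟫ + (1 - LinearMap.det A) * ⟪v, w⟫) :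
    ∀ v : V, v ≠ 0 → 0 < h v v := by
  intro v hv
  -- orthonormal basis indexed by `Fin 2`
  let b : OrthonormalBasis (Fin 2) ℝ V :=
    (stdOrthonormalBasis ℝ V).reindex (finCongr hdim)
  set e0 := b 0 with he0
  set e1 := b 1 with he1
  have hon : Orthonormal ℝ b := b.orthonormal
  have h00 : ⟪e0, e0⟫ = 1 := by
    rw [real_inner_self_eq_norm_sq, he0, hon.1 0]; norm_num
  have h11 : ⟪e1, e1⟫ = 1 := by
    rw [real_inner_self_eq_norm_sq, he1, hon.1 1]; norm_num
  have h01 : ⟪e0, e1⟫ = 0 := hon.2 (by decide)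
  have h10 : ⟪e1, e0⟫ = 0 := hon.2 (by decide)
  set a := ⟪A e0, e0⟫ with ha
  set c := ⟪A e0, e1⟫ with hc
  set d := ⟪A e1, e1⟫ with hd
  have ha' : ⟪e0, A e0⟫ = a := by rw [ha, hsa]
  have hd' : ⟪e1, A e1⟫ = d := by rw [hd, hsa]
  have hc' : ⟪e0, A e1⟫ = c := by rw [hc, hsa]
  have hc'' : ⟪e1, A e0⟫ = c := by rw [real_inner_comm]
  have hc''' : ⟪A e1, e0⟫ = c := by rw [hsa]; exact hc''
  -- matrix entries
  have hM : ∀ i j, LinearMap.toMatrix b.toBasis b.toBasis A i j = ⟪b i, A (b j)⟫ := by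
    intro i j
    rw [LinearMap.toMatrix_apply, OrthonormalBasis.coe_toBasis_repr_apply,
      b.repr_apply_apply, OrthonormalBasis.coe_toBasis]
  have htr' : a + d = 0 := by
    have h2 : (0:ℝ) = Matrix.trace (LinearMap.toMatrix b.toBasis b.toBasis A) := by
      rw [← LinearMap.trace_eq_matrix_trace ℝ b.toBasis A, htr]
    rw [Matrix.trace_fin_two, hM 0 0, hM 1 1, ← he0, ← he1, ha', hd'] at h2
    linarith
  have hdet' : LinearMap.det A = a * d - c * c := by
    rw [← LinearMap.det_toMatrix b.toBasis A, Matrix.det_fin_two,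
      hM 0 0, hM 1 1, hM 0 1, hM 1 0, ← he0, ← he1, ha', hd', hc', hc'']
  -- expand v
  set x := b.repr v 0 with hx
  set y := b.repr v 1 with hy
  have hvxy : v = x • e0 + y • e1 := by
    have := b.sum_repr v
    rw [Fin.sum_univ_two] at this
    exact this.symm
  have hvv : ⟪v, v⟫ = x ^ 2 + y ^ 2 := by
    rw [hvxy]
    simp only [inner_add_left, inner_add_right, real_inner_smul_left,
      real_inner_smul_right, h00, h11, h01, h10]
    ring
  have hAvv : ⟪A v, v⟫ = a * x ^ 2 + 2 * c * x * y + d * y ^ 2 := by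
    rw [hvxy]
    simp only [map_add, map_smul, inner_add_left, inner_add_right,
      real_inner_smul_left, real_inner_smul_right, ← ha, ← hc, ← hd, hc''']
    ring
  have hpos : (0:ℝ) < x ^ 2 + y ^ 2 := by
    rw [← hvv]
    refine lt_of_le_of_ne real_inner_self_nonneg ?_
    intro h0
    exact hv (real_inner_self_nonpos.mp (le_of_eq h0.symm))
  have hda : d = -a := by linarith
  rw [hdef, hvv, hAvv, hdet', hda]
  have hdetlt : (0:ℝ) < 1 - a * a - c * c := by
    have := hdet; rw [hdet', hda] at this; nlinarith
  nlinarith [sq_nonneg ((1 + a) * x + c * y), sq_nonneg (c * x + (1 - a) * y),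
    sq_nonneg ((1 - a) * ((1 + a) * x + c * y) - c * (c * x + (1 - a) * y)),
    sq_nonneg ((1 - a) * (c * x + (1 - a) * y) + c * ((1 + a) * x + c * y)),
    sq_nonneg ((1 + a) * (c * x + (1 - a) * y) - c * ((1 + a) * x + c * y)),
    sq_nonneg ((1 + a) * ((1 + a) * x + c * y) + c * (c * x + (1 - a) * y)),
    mul_pos hpos hdetlt, sq_nonneg a, sq_nonneg c, sq_nonneg x, sq_nonneg y]
end

section
/- Let V be a 2-dimensional real inner product space and 𝔸 : V → V a self-adjoint endomorphism with trace zero satisfying det 𝔸 > −1. Define 𝓘 := (1 + det 𝔸)⁻¹·(id − 𝔸) and the symmetric bilinear form h(v, w) := 2⟨𝔸v, w⟩ + (1 − det 𝔸)⟨v, w⟩. Then for all v, w ∈ V, h(𝓘v, 𝓘w) = ⟨v, w⟩; that is, 𝓘 is a linear isometry from (V, ⟨·,·⟩) to (V, h). -/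
open scoped RealInnerProductSpace

lemma matsq (M : Matrix (Fin 2) (Fin 2) ℝ) (htr : M.trace = 0) :
    M * M = (-M.det) • 1 := by
  have h11 : M 1 1 = -M 0 0 := by
    have := htr
    simp [Matrix.trace, Matrix.diag, Fin.sum_univ_two] at this
    linarith
  ext i j
  fin_cases i <;> fin_cases j <;>
    simp [Matrix.mul_apply, Fin.sum_univ_two, Matrix.det_fin_two, Matrix.one_apply, h11] <;> ring

lemma sq_eq (V : Type*) [AddCommGroup V] [Module ℝ V] [Module.Finite ℝ V]
    (hdim : Module.finrank ℝ V = 2) (A : V →ₗ[ℝ] V)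
    (htr : LinearMap.trace ℝ V A = 0) (v : V) :
    A (A v) = (-LinearMap.det A) • v := by
  have : Module.Free ℝ V := Module.Free.of_divisionRing ℝ V
  let b := Module.finBasisOfFinrankEq ℝ V hdim
  have hM := matsq (LinearMap.toMatrix b b A) ?_
  · have : A * A = (-LinearMap.det A) • (1 : V →ₗ[ℝ] V) := by
      apply (LinearMap.toMatrix b b).injective
      rw [← LinearMap.det_toMatrix b]
      simpa [LinearMap.toMatrix_mul] using hM
    calc A (A v) = (A * A) v := rfl
      _ = (-LinearMap.det A) • v := by rw [this]; simp
  · rw [← LinearMap.trace_eq_matrix_trace ℝ b, htr]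

/-- If `V` is a 2-dimensional real inner product space and `𝔸 : V → V` is a
self-adjoint traceless endomorphism with `det 𝔸 > −1`, and we set
`𝓘 := (1 + det 𝔸)⁻¹ • (id − 𝔸)` and `h(v, w) := 2⟨𝔸v, w⟩ + (1 − det 𝔸)⟨v, w⟩`, then
`h(𝓘v, 𝓘w) = ⟨v, w⟩` for all `v, w ∈ V`: `𝓘` is a linear isometry from `(V, ⟨·,·⟩)` to
`(V, h)`. -/
theorem I_isometry
    (V : Type*) [NormedAddCommGroup V] [InnerProductSpace ℝ V] [FiniteDimensional ℝ V]
    (hdim : Module.finrank ℝ V = 2)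
    (A : V →ₗ[ℝ] V)
    (hsa : ∀ v w : V, ⟪A v, w⟫ = ⟪v, A w⟫)
    (htr : LinearMap.trace ℝ V A = 0)
    (hdet : LinearMap.det A > -1)
    (I : V →ₗ[ℝ] V)
    (hI : I = (1 + LinearMap.det A)⁻¹ • ((LinearMap.id : V →ₗ[ℝ] V) - A))
    (h : V → V → ℝ)
    (hdef : ∀ v w : V, h v w = 2 * ⟪A v, w⟫ + (1 - LinearMap.det A) * ⟪v, w⟫) :
    ∀ v w : V, h (I v) (I w) = ⟪v, w⟫ := by
  intro v w
  set d := LinearMap.det A with hd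
  have hne : 1 + d ≠ 0 := by linarith
  have hsq : ∀ u : V, A (A u) = (-d) • u := sq_eq V hdim A htr
  have hAA : ⟪A v, A w⟫ = -d * ⟪v, w⟫ := by
    rw [hsa, hsq w, real_inner_smul_right]
  have hA2 : ⟪A (A v), w⟫ = -d * ⟪v, w⟫ := by
    rw [hsq v, real_inner_smul_left]
  have hvw : ⟪v, A w⟫ = ⟪A v, w⟫ := (hsa v w).symm
  have hA3 : ⟪A (A v), A w⟫ = -d * ⟪A v, w⟫ := by
    rw [hsq v, real_inner_smul_left, hvw]
  subst hI
  rw [hdef]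
  simp only [LinearMap.smul_apply, LinearMap.sub_apply, LinearMap.id_apply, map_smul, map_sub,
    real_inner_smul_left, real_inner_smul_right, inner_sub_left, inner_sub_right,
    hAA, hA2, hvw, hA3]
  field_simp
  ring
end
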